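/- Let α ∈ (0,2) and let U(θ,φ) = (2 cos φ)^(−α)·[1 + (cos² θ + tan² φ)^(−α/2) + (sin² θ + tan² φ)^(−α/2)] for θ ∈ ℝ and φ ∈ (−π/2, π/2) with cos² θ + tan² φ ≠ 0 and sin² θ + tan² φ ≠ 0. Then (θ,φ) is a critical point of U (both partial derivatives ∂U/∂θ and ∂U/∂φ vanish) if and only if one of the following holds for some integer k: (i) φ = 0 and θ = π/4 + kπ/2 (square configurations); (ii) φ = ±π/4 and θ = kπ/2 (rectangular prism configurations); (iii) φ = ±arctan(1/√2) and θ = π/4 + kπ/2 (tetrahedral configurations). In particular every central configuration of the dihedral 4-body problem is symmetric with respect to one of the reflections h_φ, h_θ or h'_θ. -/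

import Mathlib

open Real

/-- The dihedral 4-body potential reduced to the unit sphere, in spherical
coordinates `(θ, φ)`. -/
noncomputable def dihedralPotential (α θ φ : ℝ) : ℝ :=
  (2 * Real.cos φ) ^ (-α) *
    (1 + (Real.cos θ ^ 2 + Real.tan φ ^ 2) ^ (-(α/2)) +
      (Real.sin θ ^ 2 + Real.tan φ ^ 2) ^ (-(α/2)))

/-- For `α ∈ (0,2)`, a point `(θ,φ)` (with `φ ∈ (−π/2, π/2)` and away from the
double-collision sets) is a critical point of the reduced dihedral potential if
and only if it is a square configuration (`φ = 0`, `θ = π/4 + kπ/2`), a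
rectangular prism configuration (`φ = ±π/4`, `θ = kπ/2`), or a tetrahedral
configuration (`φ = ±arctan(1/√2)`, `θ = π/4 + kπ/2`). -/
private lemma rpow_base_inj {x y c : ℝ} (hx : 0 < x) (hy : 0 < y) (hc : c ≠ 0)
    (h : x ^ c = y ^ c) : x = y := by
  have h2 := congrArg (fun z : ℝ => z ^ (1/c)) h
  simp only [← Real.rpow_mul hx.le, ← Real.rpow_mul hy.le] at h2
  rwa [mul_one_div_cancel hc, Real.rpow_one, Real.rpow_one] at h2

private lemma rpow_eq_one_iff' {x c : ℝ} (hx : 0 < x) (hc : c ≠ 0) :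
    x ^ c = 1 ↔ x = 1 := by
  constructor
  · intro h; exact rpow_base_inj hx one_pos hc (by simpa using h)
  · rintro rfl; simp

private lemma sq_eq_iff' {a b : ℝ} : a ^ 2 = b ^ 2 ↔ a = b ∨ a = -b := by
  rw [sq, sq, mul_self_eq_mul_self_iff]

private lemma theta_cos_iff {θ : ℝ} :
    Real.cos θ ^ 2 = Real.sin θ ^ 2 ↔ ∃ k : ℤ, θ = π/4 + k * (π/2) := by
  have h : Real.cos θ ^ 2 = Real.sin θ ^ 2 ↔ Real.cos (2*θ) = 0 := by
    rw [Real.cos_two_mul]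
    have := Real.sin_sq_add_cos_sq θ
    constructor <;> intro h <;> nlinarith
  rw [h, Real.cos_eq_zero_iff]
  constructor <;> rintro ⟨k, hk⟩ <;> exact ⟨k, by push_cast at hk ⊢ <;> linarith⟩

private lemma theta_sin_iff {θ : ℝ} :
    Real.sin θ * Real.cos θ = 0 ↔ ∃ k : ℤ, θ = k * (π/2) := by
  have h : Real.sin θ * Real.cos θ = 0 ↔ Real.sin (2*θ) = 0 := by
    rw [Real.sin_two_mul]; constructor <;> intro h <;> linarith [h]
  rw [h, Real.sin_eq_zero_iff]
  constructor <;> rintro ⟨k, hk⟩ <;> exact ⟨k, by push_cast at hk ⊢ <;> linarith⟩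

private lemma deriv_theta (α φ θ : ℝ)
    (h1 : Real.cos θ ^ 2 + Real.tan φ ^ 2 ≠ 0)
    (h2 : Real.sin θ ^ 2 + Real.tan φ ^ 2 ≠ 0) :
    deriv (fun θ' : ℝ => dihedralPotential α θ' φ) θ =
      (2 * Real.cos φ) ^ (-α) * (-(α/2)) * (2 * Real.sin θ * Real.cos θ) *
        ((Real.sin θ ^ 2 + Real.tan φ ^ 2) ^ (-(α/2) - 1)
          - (Real.cos θ ^ 2 + Real.tan φ ^ 2) ^ (-(α/2) - 1)) := by
  have hA : HasDerivAt (fun θ' : ℝ => Real.cos θ' ^ 2 + Real.tan φ ^ 2)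
      ((2 : ℕ) * Real.cos θ ^ 1 * (-Real.sin θ)) θ :=
    ((Real.hasDerivAt_cos θ).pow 2).add_const _
  have hB : HasDerivAt (fun θ' : ℝ => Real.sin θ' ^ 2 + Real.tan φ ^ 2)
      ((2 : ℕ) * Real.sin θ ^ 1 * Real.cos θ) θ :=
    ((Real.hasDerivAt_sin θ).pow 2).add_const _
  have H : HasDerivAt (fun θ' : ℝ => dihedralPotential α θ' φ)
      ((2 * Real.cos φ) ^ (-α) *
        ((0 : ℝ) + ((2 : ℕ) * Real.cos θ ^ 1 * (-Real.sin θ)) * (-(α/2)) *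
            (Real.cos θ ^ 2 + Real.tan φ ^ 2) ^ (-(α/2) - 1)
          + ((2 : ℕ) * Real.sin θ ^ 1 * Real.cos θ) * (-(α/2)) *
            (Real.sin θ ^ 2 + Real.tan φ ^ 2) ^ (-(α/2) - 1))) θ := by
    exact (((hasDerivAt_const θ (1:ℝ)).add (hA.rpow_const (Or.inl h1))).add
      (hB.rpow_const (Or.inl h2))).const_mul _
  rw [H.deriv]; push_cast; ring

private lemma deriv_phi (α θ φ : ℝ) (hc : 0 < Real.cos φ)
    (h1 : Real.cos θ ^ 2 + Real.tan φ ^ 2 ≠ 0)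
    (h2 : Real.sin θ ^ 2 + Real.tan φ ^ 2 ≠ 0) :
    deriv (fun φ' : ℝ => dihedralPotential α θ φ') φ =
      α * Real.tan φ * (2 * Real.cos φ) ^ (-α) *
        ((1 + (Real.cos θ ^ 2 + Real.tan φ ^ 2) ^ (-(α/2)) +
            (Real.sin θ ^ 2 + Real.tan φ ^ 2) ^ (-(α/2)))
          - (1 / Real.cos φ ^ 2) *
            ((Real.cos θ ^ 2 + Real.tan φ ^ 2) ^ (-(α/2) - 1) +
              (Real.sin θ ^ 2 + Real.tan φ ^ 2) ^ (-(α/2) - 1))) := by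
  have hcne : Real.cos φ ≠ 0 := ne_of_gt hc
  have hc2 : (0:ℝ) < 2 * Real.cos φ := by linarith
  have hbase : HasDerivAt (fun φ' : ℝ => 2 * Real.cos φ') (2 * (-Real.sin φ)) φ :=
    (Real.hasDerivAt_cos φ).const_mul 2
  have hcoef : HasDerivAt (fun φ' : ℝ => (2 * Real.cos φ') ^ (-α))
      ((2 * (-Real.sin φ)) * (-α) * (2 * Real.cos φ) ^ (-α - 1)) φ :=
    hbase.rpow_const (Or.inl (ne_of_gt hc2))
  have ht2 : HasDerivAt (fun φ' : ℝ => Real.tan φ' ^ 2)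
      ((2 : ℕ) * Real.tan φ ^ 1 * (1 / Real.cos φ ^ 2)) φ :=
    (Real.hasDerivAt_tan hcne).pow 2
  have hA : HasDerivAt (fun φ' : ℝ => Real.cos θ ^ 2 + Real.tan φ' ^ 2)
      ((2 : ℕ) * Real.tan φ ^ 1 * (1 / Real.cos φ ^ 2)) φ := ht2.const_add _
  have hB : HasDerivAt (fun φ' : ℝ => Real.sin θ ^ 2 + Real.tan φ' ^ 2)
      ((2 : ℕ) * Real.tan φ ^ 1 * (1 / Real.cos φ ^ 2)) φ := ht2.const_add _
  have hS : HasDerivAt (fun φ' : ℝ =>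
      1 + (Real.cos θ ^ 2 + Real.tan φ' ^ 2) ^ (-(α/2)) +
        (Real.sin θ ^ 2 + Real.tan φ' ^ 2) ^ (-(α/2)))
      ((0 : ℝ) + (((2 : ℕ) * Real.tan φ ^ 1 * (1 / Real.cos φ ^ 2)) * (-(α/2)) *
          (Real.cos θ ^ 2 + Real.tan φ ^ 2) ^ (-(α/2) - 1))
        + (((2 : ℕ) * Real.tan φ ^ 1 * (1 / Real.cos φ ^ 2)) * (-(α/2)) *
          (Real.sin θ ^ 2 + Real.tan φ ^ 2) ^ (-(α/2) - 1))) φ :=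
    ((hasDerivAt_const φ (1:ℝ)).add (hA.rpow_const (Or.inl h1))).add
      (hB.rpow_const (Or.inl h2))
  have H := hcoef.mul hS
  simp only [dihedralPotential]
  erw [H.deriv]
  have hsplit : (2 * Real.cos φ) ^ (-α - 1) =
      (2 * Real.cos φ) ^ (-α) * (2 * Real.cos φ)⁻¹ := by
    rw [show -α - 1 = -α + (-1) by ring, Real.rpow_add hc2, Real.rpow_neg_one]
  have htan : Real.tan φ = Real.sin φ / Real.cos φ := Real.tan_eq_sin_div_cos φ
  rw [hsplit, htan]
  push_cast
  field_simp
  ring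

theorem dihedral_central_configurations_classification
    (α : ℝ) (hα : α ∈ Set.Ioo (0:ℝ) 2) (θ φ : ℝ)
    (hφ : φ ∈ Set.Ioo (-(π/2)) (π/2))
    (h1 : Real.cos θ ^ 2 + Real.tan φ ^ 2 ≠ 0)
    (h2 : Real.sin θ ^ 2 + Real.tan φ ^ 2 ≠ 0) :
    (deriv (fun θ' : ℝ => dihedralPotential α θ' φ) θ = 0 ∧
     deriv (fun φ' : ℝ => dihedralPotential α θ φ') φ = 0) ↔
      ((φ = 0 ∧ ∃ k : ℤ, θ = π/4 + k * (π/2)) ∨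
       ((φ = π/4 ∨ φ = -(π/4)) ∧ ∃ k : ℤ, θ = k * (π/2)) ∨
       ((φ = Real.arctan (1 / Real.sqrt 2) ∨ φ = -Real.arctan (1 / Real.sqrt 2)) ∧
         ∃ k : ℤ, θ = π/4 + k * (π/2))) := by
  obtain ⟨hα0, hα2⟩ := hα
  obtain ⟨hφ1, hφ2⟩ := hφ
  have hcosφ : 0 < Real.cos φ := Real.cos_pos_of_mem_Ioo ⟨hφ1, hφ2⟩
  have hcne : Real.cos φ ≠ 0 := ne_of_gt hcosφ
  have hc2pos : (0:ℝ) < 2 * Real.cos φ := by linarith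
  have hcpos : (0:ℝ) < (2 * Real.cos φ) ^ (-α) := Real.rpow_pos_of_pos hc2pos _
  have hpne : -(α/2) ≠ 0 := by intro h; linarith [neg_eq_zero.mp h]
  have hq : -(α/2) - 1 ≠ 0 := by intro h; nlinarith
  have hApos : (0:ℝ) < Real.cos θ ^ 2 + Real.tan φ ^ 2 :=
    lt_of_le_of_ne (by positivity) (Ne.symm h1)
  have hBpos : (0:ℝ) < Real.sin θ ^ 2 + Real.tan φ ^ 2 :=
    lt_of_le_of_ne (by positivity) (Ne.symm h2)
  have hsec : 1 / Real.cos φ ^ 2 = 1 + Real.tan φ ^ 2 := by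
    have h := Real.inv_one_add_tan_sq hcne
    rw [one_div, ← h, inv_inv]
  have hphi_eq : ∀ v : ℝ, Real.tan φ = v → φ = Real.arctan v := by
    intro v hv; rw [← hv, Real.arctan_tan hφ1 hφ2]
  -- reduce the two derivative conditions
  have Zθ : deriv (fun θ' : ℝ => dihedralPotential α θ' φ) θ = 0 ↔
      (Real.sin θ * Real.cos θ = 0 ∨ Real.cos θ ^ 2 = Real.sin θ ^ 2) := by
    rw [deriv_theta α φ θ h1 h2]
    constructor
    · intro h
      rcases mul_eq_zero.mp h with h' | h'
      · rcases mul_eq_zero.mp h' with h'' | h''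
        · exact absurd h'' (mul_ne_zero (ne_of_gt hcpos) hpne)
        · left; linarith
      · right
        have hBA := rpow_base_inj hBpos hApos hq (sub_eq_zero.mp h')
        linarith
    · rintro (h | h)
      · linear_combination ((2*Real.cos φ)^(-α) * (-(α/2)) * 2 *
          ((Real.sin θ^2+Real.tan φ^2)^(-(α/2)-1) -
            (Real.cos θ^2+Real.tan φ^2)^(-(α/2)-1))) * h
      · have hAB : Real.sin θ ^ 2 + Real.tan φ ^ 2 = Real.cos θ ^ 2 + Real.tan φ ^ 2 := by
          linarith
        rw [hAB, sub_self, mul_zero]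
  have Zφ : deriv (fun φ' : ℝ => dihedralPotential α θ φ') φ = 0 ↔
      (Real.tan φ = 0 ∨
        (1 + (Real.cos θ ^ 2 + Real.tan φ ^ 2) ^ (-(α/2)) +
            (Real.sin θ ^ 2 + Real.tan φ ^ 2) ^ (-(α/2)))
          - (1 + Real.tan φ ^ 2) *
            ((Real.cos θ ^ 2 + Real.tan φ ^ 2) ^ (-(α/2) - 1) +
              (Real.sin θ ^ 2 + Real.tan φ ^ 2) ^ (-(α/2) - 1)) = 0) := by
    rw [deriv_phi α θ φ hcosφ h1 h2, hsec]
    constructor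
    · intro h
      rcases mul_eq_zero.mp h with h' | h'
      · rcases mul_eq_zero.mp h' with h'' | h''
        · rcases mul_eq_zero.mp h'' with h3 | h3
          · exact absurd h3 (ne_of_gt hα0)
          · exact Or.inl h3
        · exact absurd h'' (ne_of_gt hcpos)
      · exact Or.inr h'
    · rintro (h | h)
      · rw [h]; ring
      · rw [h]; ring
  rw [Zθ, Zφ]
  have hpq : -(α/2) = (-(α/2) - 1) + 1 := by ring
  constructor
  · rintro ⟨hθc, hφc⟩
    rcases hφc with ht0 | hG
    · -- tan φ = 0
      rcases hθc with hsc | hcs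
      · rcases mul_eq_zero.mp hsc with hs | hs
        · exact absurd (by rw [hs, ht0]; ring) h2
        · exact absurd (by rw [hs, ht0]; ring) h1
      · exact Or.inl ⟨by rw [hphi_eq 0 ht0, Real.arctan_zero], theta_cos_iff.mp hcs⟩
    · rcases hθc with hsc | hcs
      · -- prism case
        refine Or.inr (Or.inl ⟨?_, theta_sin_iff.mp hsc⟩)
        have ht2 : Real.tan φ ^ 2 = 1 := by
          rcases mul_eq_zero.mp hsc with hs | hs
          · have hs2 : Real.sin θ ^ 2 = 0 := by rw [hs]; ring
            have hc2 : Real.cos θ ^ 2 = 1 := by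
              have := Real.sin_sq_add_cos_sq θ; linarith
            rw [hs2] at hG hBpos; rw [hc2] at hG
            have htne : (0:ℝ) < Real.tan φ ^ 2 := by linarith
            have hx : ((1:ℝ) + Real.tan φ ^ 2) ^ (-(α/2)) =
                (1 + Real.tan φ ^ 2) ^ (-(α/2) - 1) * (1 + Real.tan φ ^ 2) := by
              nth_rewrite 1 [hpq]; exact Real.rpow_add_one (by positivity) _
            have hy : ((0:ℝ) + Real.tan φ ^ 2) ^ (-(α/2)) =
                (0 + Real.tan φ ^ 2) ^ (-(α/2) - 1) * (0 + Real.tan φ ^ 2) := by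
              nth_rewrite 1 [hpq]; exact Real.rpow_add_one (by positivity) _
            have hyq : ((0:ℝ) + Real.tan φ ^ 2) ^ (-(α/2) - 1) = 1 := by
              linear_combination -hG + hx + hy
            have := (rpow_eq_one_iff' (by linarith : (0:ℝ) < 0 + Real.tan φ ^ 2) hq).mp hyq
            linarith
          · have hc2 : Real.cos θ ^ 2 = 0 := by rw [hs]; ring
            have hs2 : Real.sin θ ^ 2 = 1 := by
              have := Real.sin_sq_add_cos_sq θ; linarith
            rw [hc2] at hG hApos; rw [hs2] at hG
            have htne : (0:ℝ) < Real.tan φ ^ 2 := by linarith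
            have hx : ((1:ℝ) + Real.tan φ ^ 2) ^ (-(α/2)) =
                (1 + Real.tan φ ^ 2) ^ (-(α/2) - 1) * (1 + Real.tan φ ^ 2) := by
              nth_rewrite 1 [hpq]; exact Real.rpow_add_one (by positivity) _
            have hy : ((0:ℝ) + Real.tan φ ^ 2) ^ (-(α/2)) =
                (0 + Real.tan φ ^ 2) ^ (-(α/2) - 1) * (0 + Real.tan φ ^ 2) := by
              nth_rewrite 1 [hpq]; exact Real.rpow_add_one (by positivity) _
            have hyq : ((0:ℝ) + Real.tan φ ^ 2) ^ (-(α/2) - 1) = 1 := by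
              linear_combination -hG + hx + hy
            have := (rpow_eq_one_iff' (by linarith : (0:ℝ) < 0 + Real.tan φ ^ 2) hq).mp hyq
            linarith
        have := sq_eq_iff'.mp (show Real.tan φ ^ 2 = 1 ^ 2 by rw [ht2]; norm_num)
        rcases this with h | h
        · exact Or.inl (by rw [hphi_eq 1 h, Real.arctan_one])
        · refine Or.inr ?_
          rw [hphi_eq (-1) h, show Real.arctan (-1) = -(π/4) by
            rw [show (-1:ℝ) = -(1:ℝ) from rfl, Real.arctan_neg, Real.arctan_one]]
      · -- tetrahedron case
        refine Or.inr (Or.inr ⟨?_, theta_cos_iff.mp hcs⟩)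
        have hc2 : Real.cos θ ^ 2 = 1/2 := by
          have := Real.sin_sq_add_cos_sq θ; linarith
        have hs2 : Real.sin θ ^ 2 = 1/2 := by
          have := Real.sin_sq_add_cos_sq θ; linarith
        rw [hc2, hs2] at hG
        have hz : ((1:ℝ)/2 + Real.tan φ ^ 2) ^ (-(α/2)) =
            (1/2 + Real.tan φ ^ 2) ^ (-(α/2) - 1) * (1/2 + Real.tan φ ^ 2) := by
          nth_rewrite 1 [hpq]; exact Real.rpow_add_one (by positivity) _
        have hzq : ((1:ℝ)/2 + Real.tan φ ^ 2) ^ (-(α/2) - 1) = 1 := by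
          linear_combination -hG + 2*hz
        have hz1 := (rpow_eq_one_iff' (by positivity : (0:ℝ) < 1/2 + Real.tan φ ^ 2) hq).mp hzq
        have ht2 : Real.tan φ ^ 2 = (1 / Real.sqrt 2) ^ 2 := by
          rw [div_pow, one_pow, Real.sq_sqrt (by norm_num : (0:ℝ) ≤ 2)]
          linarith
        rcases sq_eq_iff'.mp ht2 with h | h
        · exact Or.inl (hphi_eq _ h)
        · refine Or.inr ?_
          rw [hphi_eq _ h, Real.arctan_neg]
  · rintro (⟨hphi, k, hθ⟩ | ⟨hphi, k, hθ⟩ | ⟨hphi, k, hθ⟩)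
    · -- square
      have ht0 : Real.tan φ = 0 := by rw [hphi, Real.tan_zero]
      exact ⟨Or.inr (theta_cos_iff.mpr ⟨k, hθ⟩), Or.inl ht0⟩
    · -- prism
      have ht2 : Real.tan φ ^ 2 = 1 := by
        rcases hphi with h | h
        · rw [h, Real.tan_pi_div_four]; norm_num
        · rw [h, Real.tan_neg, Real.tan_pi_div_four]; norm_num
      have hsc : Real.sin θ * Real.cos θ = 0 := theta_sin_iff.mpr ⟨k, hθ⟩
      refine ⟨Or.inl hsc, Or.inr ?_⟩
      rcases mul_eq_zero.mp hsc with hs | hs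
      · have hs2 : Real.sin θ ^ 2 = 0 := by rw [hs]; ring
        have hc2 : Real.cos θ ^ 2 = 1 := by
          have := Real.sin_sq_add_cos_sq θ; linarith
        rw [hs2, hc2, ht2]
        have h2p : ((1:ℝ) + 1) ^ (-(α/2)) = (1 + 1:ℝ) ^ (-(α/2) - 1) * (1+1) := by
          nth_rewrite 1 [hpq]; exact Real.rpow_add_one (by norm_num) _
        have h0 : ((0:ℝ) + 1) ^ (-(α/2)) = 1 := by rw [show (0:ℝ)+1 = 1 by norm_num, Real.one_rpow]
        have h0' : ((0:ℝ) + 1) ^ (-(α/2) - 1) = 1 := by rw [show (0:ℝ)+1 = 1 by norm_num, Real.one_rpow]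
        linear_combination h2p + h0 - 2 * h0'
      · have hc2 : Real.cos θ ^ 2 = 0 := by rw [hs]; ring
        have hs2 : Real.sin θ ^ 2 = 1 := by
          have := Real.sin_sq_add_cos_sq θ; linarith
        rw [hs2, hc2, ht2]
        have h2p : ((1:ℝ) + 1) ^ (-(α/2)) = (1 + 1:ℝ) ^ (-(α/2) - 1) * (1+1) := by
          nth_rewrite 1 [hpq]; exact Real.rpow_add_one (by norm_num) _
        have h0 : ((0:ℝ) + 1) ^ (-(α/2)) = 1 := by rw [show (0:ℝ)+1 = 1 by norm_num, Real.one_rpow]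
        have h0' : ((0:ℝ) + 1) ^ (-(α/2) - 1) = 1 := by rw [show (0:ℝ)+1 = 1 by norm_num, Real.one_rpow]
        linear_combination h2p + h0 - 2 * h0'
    · -- tetrahedron
      have ht2 : Real.tan φ ^ 2 = 1/2 := by
        have hv : (1 / Real.sqrt 2) ^ 2 = (1:ℝ)/2 := by
          rw [div_pow, one_pow, Real.sq_sqrt (by norm_num : (0:ℝ) ≤ 2)]
        rcases hphi with h | h
        · rw [h, Real.tan_arctan]; exact hv
        · rw [h, Real.tan_neg, Real.tan_arctan, neg_sq]; exact hv
      have hcs : Real.cos θ ^ 2 = Real.sin θ ^ 2 := theta_cos_iff.mpr ⟨k, hθ⟩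
      refine ⟨Or.inr hcs, Or.inr ?_⟩
      have hc2 : Real.cos θ ^ 2 = 1/2 := by
        have := Real.sin_sq_add_cos_sq θ; linarith
      have hs2 : Real.sin θ ^ 2 = 1/2 := by
        have := Real.sin_sq_add_cos_sq θ; linarith
      rw [hc2, hs2, ht2]
      norm_num [Real.one_rpow]
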